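/- Let F : ℝ^{nd} → ℝ be convex, differentiable and L-smooth; let G_1,…,G_m : ℝ^{nd} → ℝ be convex and c-Lipschitz, G = ∑_j G_j, H = F + G, and let x* be a minimizer of H. Fix α with 0 < α ≤ 1/(8L), β = mα, x ∈ ℝ^{nd}, and set z = x − α·∇F(x). Then: (1/m)·∑_{j=1}^m ‖prox_{βG_j}(z) − x*‖² ≤ ‖x − x*‖² − α·(H(x) − H(x*)) + 7m²c²·α². -/

import Mathlib

set_option maxHeartbeats 2000000

open Set InnerProductSpace
open scoped RealInnerProductSpace

variable {E : Type*} [NormedAddCommGroup E] [InnerProductSpace ℝ E] [CompleteSpace E]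

lemma line_hasDerivAt (F : E → ℝ) (gF : E → E)
    (hdiff : ∀ w, HasGradientAt F (gF w) w) (x v : E) (t : ℝ) :
    HasDerivAt (fun r : ℝ => F (x + r • v)) ⟪gF (x + t • v), v⟫_ℝ t := by
  have hc : HasDerivAt (fun r : ℝ => x + r • v) v t := by
    simpa using ((hasDerivAt_id t).smul_const v).const_add x
  have hf : HasFDerivAt F (toDual ℝ E (gF (x + t • v))) (x + t • v) :=
    (hdiff _).hasFDerivAt
  exact hf.comp_hasDerivAt t hc

lemma descent_lemma (F : E → ℝ) (gF : E → E) (L : ℝ)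
    (hdiff : ∀ w, HasGradientAt F (gF w) w)
    (hlip : ∀ a b, ‖gF a - gF b‖ ≤ L * ‖a - b‖) (x y : E) :
    F y ≤ F x + ⟪gF x, y - x⟫_ℝ + L / 2 * ‖y - x‖ ^ 2 := by
  set v := y - x with hv
  set ψ := fun t : ℝ => F x + t * ⟪gF x, v⟫_ℝ + L / 2 * ‖v‖ ^ 2 * t ^ 2 - F (x + t • v) with hψdef
  have hψ : ∀ t : ℝ, HasDerivAt ψ
      (⟪gF x, v⟫_ℝ + L * ‖v‖ ^ 2 * t - ⟪gF (x + t • v), v⟫_ℝ) t := by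
    intro t
    have h1 : HasDerivAt (fun t : ℝ => F x + t * ⟪gF x, v⟫_ℝ + L / 2 * ‖v‖ ^ 2 * t ^ 2)
        (⟪gF x, v⟫_ℝ + L * ‖v‖ ^ 2 * t) t := by
      have ha : HasDerivAt (fun t : ℝ => F x + t * ⟪gF x, v⟫_ℝ) ⟪gF x, v⟫_ℝ t := by
        simpa using ((hasDerivAt_id t).mul_const ⟪gF x, v⟫_ℝ).const_add (F x)
      have hb : HasDerivAt (fun t : ℝ => L / 2 * ‖v‖ ^ 2 * t ^ 2)
          (L / 2 * ‖v‖ ^ 2 * (2 * t)) t := by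
        simpa using (hasDerivAt_pow 2 t).const_mul (L / 2 * ‖v‖ ^ 2)
      have := ha.add hb
      rw [show L * ‖v‖ ^ 2 * t = L / 2 * ‖v‖ ^ 2 * (2 * t) by ring]
      exact this
    exact h1.sub (line_hasDerivAt F gF hdiff x v t)
  have hmono : MonotoneOn ψ (Icc 0 1) := by
    apply monotoneOn_of_deriv_nonneg (convex_Icc 0 1)
    · exact (continuous_iff_continuousAt.mpr fun t => (hψ t).continuousAt).continuousOn
    · intro t _; exact (hψ t).differentiableAt.differentiableWithinAt
    · intro t ht
      rw [interior_Icc] at ht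
      rw [(hψ t).deriv]
      have hle : ⟪gF (x + t • v) - gF x, v⟫_ℝ ≤ L * ‖v‖ ^ 2 * t := by
        calc ⟪gF (x + t • v) - gF x, v⟫_ℝ ≤ ‖gF (x + t • v) - gF x‖ * ‖v‖ :=
              real_inner_le_norm _ _
          _ ≤ L * ‖x + t • v - x‖ * ‖v‖ :=
              mul_le_mul_of_nonneg_right (hlip _ _) (norm_nonneg v)
          _ = L * ‖v‖ ^ 2 * t := by
              rw [add_sub_cancel_left, norm_smul, Real.norm_eq_abs, abs_of_pos ht.1]; ring
      have hsplit : ⟪gF (x + t • v), v⟫_ℝ = ⟪gF x, v⟫_ℝ + ⟪gF (x + t • v) - gF x, v⟫_ℝ := by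
        rw [inner_sub_left]; ring
      linarith
  have h01 : ψ 0 ≤ ψ 1 :=
    hmono ⟨le_refl 0, zero_le_one⟩ ⟨zero_le_one, le_refl 1⟩ zero_le_one
  have hψ0 : ψ 0 = 0 := by simp [hψdef]
  have hψ1 : ψ 1 = F x + ⟪gF x, v⟫_ℝ + L / 2 * ‖v‖ ^ 2 - F y := by
    simp [hψdef, hv]
  rw [hψ0, hψ1] at h01
  linarith

lemma tangent_lemma (F : E → ℝ) (gF : E → E) (L : ℝ) (hL : 0 ≤ L)
    (hconv : ConvexOn ℝ Set.univ F)
    (hdiff : ∀ w, HasGradientAt F (gF w) w)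
    (hlip : ∀ a b, ‖gF a - gF b‖ ≤ L * ‖a - b‖) (x y : E) :
    F x + ⟪gF x, y - x⟫_ℝ ≤ F y := by
  set v := y - x with hv
  have key : ∀ t : ℝ, 0 < t → t ≤ 1 →
      F x + ⟪gF x, v⟫_ℝ ≤ F y + t * (3 * L / 2 * ‖v‖ ^ 2) := by
    intro t ht ht1
    set w := x + t • v with hw
    have hconvw : F w ≤ (1 - t) * F x + t * F y := by
      have h := hconv.2 (mem_univ x) (mem_univ y)
        (by linarith : (0:ℝ) ≤ 1 - t) ht.le (by ring)
      have hw2 : w = (1 - t) • x + t • y := by rw [hw, hv]; module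
      rw [hw2]; simpa [smul_eq_mul] using h
    have hdesc := descent_lemma F gF L hdiff hlip w x
    have hxw : x - w = -(t • v) := by rw [hw]; abel
    have hnxw : ‖x - w‖ = t * ‖v‖ := by
      rw [hxw, norm_neg, norm_smul, Real.norm_eq_abs, abs_of_pos ht]
    have hipw : ⟪gF w, x - w⟫_ℝ = -(t * ⟪gF w, v⟫_ℝ) := by
      rw [hxw, inner_neg_right, real_inner_smul_right]
    have hip : ⟪gF x, v⟫_ℝ - ⟪gF w, v⟫_ℝ ≤ L * (t * ‖v‖ ^ 2) := by
      calc ⟪gF x, v⟫_ℝ - ⟪gF w, v⟫_ℝ = ⟪gF x - gF w, v⟫_ℝ := by rw [inner_sub_left]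
        _ ≤ ‖gF x - gF w‖ * ‖v‖ := real_inner_le_norm _ _
        _ ≤ L * ‖x - w‖ * ‖v‖ := mul_le_mul_of_nonneg_right (hlip x w) (norm_nonneg v)
        _ = L * (t * ‖v‖ ^ 2) := by rw [hnxw]; ring
    have hdesc2 : F x ≤ (1 - t) * F x + t * F y - t * ⟪gF w, v⟫_ℝ
        + L / 2 * (t * ‖v‖) ^ 2 := by
      rw [hipw, hnxw] at hdesc
      linarith
    have hmul := mul_le_mul_of_nonneg_left hip ht.le
    have hshape : t * (F x + ⟪gF x, v⟫_ℝ) ≤ t * (F y + t * (3 * L / 2 * ‖v‖ ^ 2)) := by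
      nlinarith [hdesc2, hmul]
    exact le_of_mul_le_mul_left hshape ht
  refine le_of_forall_pos_le_add fun ε hε => ?_
  set K := 3 * L / 2 * ‖v‖ ^ 2 with hK
  have hK0 : 0 ≤ K := mul_nonneg (by linarith) (sq_nonneg _)
  set t := min 1 (ε / (K + 1)) with htdef
  have ht : 0 < t := lt_min one_pos (div_pos hε (by linarith))
  have ht1 : t ≤ 1 := min_le_left _ _
  have htK : t * K ≤ ε := by
    have h1 : t ≤ ε / (K + 1) := min_le_right _ _
    have h2 : t * K ≤ ε / (K + 1) * K := mul_le_mul_of_nonneg_right h1 hK0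
    have h3 : ε / (K + 1) * K ≤ ε := by
      rw [div_mul_eq_mul_div, div_le_iff₀ (by linarith)]
      nlinarith
    linarith
  have := key t ht ht1
  linarith

lemma coco_lemma (F : E → ℝ) (gF : E → E) (L : ℝ) (hL : 0 < L)
    (hconv : ConvexOn ℝ Set.univ F)
    (hdiff : ∀ w, HasGradientAt F (gF w) w)
    (hlip : ∀ a b, ‖gF a - gF b‖ ≤ L * ‖a - b‖) (x y : E) :
    F x - F y + 1 / (2 * L) * ‖gF x - gF y‖ ^ 2 ≤ ⟪gF x, x - y⟫_ℝ := by
  set h := fun u : E => F u - ⟪gF x, u⟫_ℝ with hdefh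
  set gh := fun u : E => gF u - gF x with hdefgh
  have hdiffh : ∀ w, HasGradientAt h (gh w) w := by
    intro w
    have he : toDual ℝ E (gF x) = innerSL ℝ (gF x) := by
      ext u; simp [InnerProductSpace.toDual_apply_apply]
    have h1 : HasFDerivAt (fun u : E => ⟪gF x, u⟫_ℝ) (toDual ℝ E (gF x)) w := by
      rw [he]; exact (innerSL ℝ (gF x)).hasFDerivAt
    have h2 := (hdiff w).hasFDerivAt.sub h1
    have h3 : toDual ℝ E (gF w) - toDual ℝ E (gF x) = toDual ℝ E (gF w - gF x) :=
      (map_sub _ _ _).symm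
    rw [h3] at h2
    have h4 := h2.hasGradientAt
    rwa [LinearIsometryEquiv.symm_apply_apply] at h4
  have hliph : ∀ a b, ‖gh a - gh b‖ ≤ L * ‖a - b‖ := by
    intro a b; simpa [hdefgh, sub_sub_sub_cancel_right] using hlip a b
  have hconvh : ConvexOn ℝ Set.univ h := by
    refine ⟨convex_univ, ?_⟩
    intro u _ w _ a b ha hb hab
    have hF := hconv.2 (mem_univ u) (mem_univ w) ha hb hab
    have hinner : ⟪gF x, a • u + b • w⟫_ℝ = a * ⟪gF x, u⟫_ℝ + b * ⟪gF x, w⟫_ℝ := by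
      rw [inner_add_right, real_inner_smul_right, real_inner_smul_right]
    simp only [hdefh, smul_eq_mul] at *
    linarith
  -- x minimizes h
  have hminx : ∀ w, h x ≤ h w := by
    intro w
    have := tangent_lemma h gh L hL.le hconvh hdiffh hliph x w
    have hz : gh x = 0 := by simp [hdefgh]
    rw [hz] at this
    simpa using this
  -- descent step for h at y
  set d := gF y - gF x with hdefd
  set w := y - (1 / L) • d with hdefw
  have hdesc := descent_lemma h gh L hdiffh hliph y w
  have hwy : w - y = -((1 / L) • d) := by rw [hdefw]; abel
  have hip : ⟪gh y, w - y⟫_ℝ = -(1 / L * ‖d‖ ^ 2) := by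
    rw [hwy, inner_neg_right, real_inner_smul_right]
    have : ⟪gh y, d⟫_ℝ = ‖d‖ ^ 2 := by
      rw [hdefgh]
      simp only [← hdefd]
      exact real_inner_self_eq_norm_sq d
    rw [this]
  have hnw : ‖w - y‖ ^ 2 = (1 / L) ^ 2 * ‖d‖ ^ 2 := by
    rw [hwy, norm_neg, norm_smul, Real.norm_eq_abs, mul_pow, sq_abs]
  have harith : -(1 / L * ‖d‖ ^ 2) + L / 2 * ((1 / L) ^ 2 * ‖d‖ ^ 2)
      = -(1 / (2 * L) * ‖d‖ ^ 2) := by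
    field_simp
    ring
  have hkey : h x ≤ h y - 1 / (2 * L) * ‖d‖ ^ 2 := by
    have h5 := hminx w
    rw [hip, hnw] at hdesc
    clear_value h gh d w
    linarith [hdesc, harith, h5]
  have hnd : ‖d‖ = ‖gF x - gF y‖ := by rw [hdefd, norm_sub_rev]
  have hxy : ⟪gF x, x⟫_ℝ - ⟪gF x, y⟫_ℝ = ⟪gF x, x - y⟫_ℝ := (inner_sub_right _ _ _).symm
  simp only [hdefh] at hkey
  rw [hnd] at hkey
  linarith [hkey, hxy.le, hxy.ge]

omit [CompleteSpace E] in
lemma comb_norm (a b : E) (l : ℝ) :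
    ‖(1 - l) • a + l • b‖ ^ 2 = (1 - l) * ‖a‖ ^ 2 + l * ‖b‖ ^ 2 - l * (1 - l) * ‖a - b‖ ^ 2 := by
  have h1 : ∀ u : E, ‖u‖ ^ 2 = ⟪u, u⟫_ℝ := fun u => (real_inner_self_eq_norm_sq u).symm
  rw [h1, h1, h1, h1]
  simp only [inner_add_left, inner_add_right, inner_sub_left, inner_sub_right,
    real_inner_smul_left, real_inner_smul_right, real_inner_comm a b]
  ring

omit [CompleteSpace E] in
lemma three_point (G : E → ℝ) (hG : ConvexOn ℝ Set.univ G) (β : ℝ) (hβ : 0 < β)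
    (z pt : E) (hmin : ∀ u, 2 * β * G pt + ‖z - pt‖ ^ 2 ≤ 2 * β * G u + ‖z - u‖ ^ 2)
    (y : E) :
    2 * β * G pt + ‖z - pt‖ ^ 2 + ‖y - pt‖ ^ 2 ≤ 2 * β * G y + ‖z - y‖ ^ 2 := by
  refine le_of_forall_pos_le_add fun ε hε => ?_
  set C := ‖y - pt‖ ^ 2 with hC
  have hC0 : 0 ≤ C := sq_nonneg _
  set l := min (1/2 : ℝ) (ε / (C + 1)) with hldef
  have hl : 0 < l := lt_min (by norm_num) (div_pos hε (by linarith))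
  have hl1 : l < 1 := lt_of_le_of_lt (min_le_left _ _) (by norm_num)
  set u := pt + l • (y - pt) with hu
  have hzu : z - u = (1 - l) • (z - pt) + l • (z - y) := by rw [hu]; module
  have hnu : ‖z - u‖ ^ 2 = (1 - l) * ‖z - pt‖ ^ 2 + l * ‖z - y‖ ^ 2
      - l * (1 - l) * ‖(z - pt) - (z - y)‖ ^ 2 := by rw [hzu, comb_norm]
  have hpy : (z - pt) - (z - y) = y - pt := by abel
  rw [hpy, ← hC] at hnu
  have hGu : G u ≤ (1 - l) * G pt + l * G y := by
    have h := hG.2 (mem_univ pt) (mem_univ y) (by linarith : (0:ℝ) ≤ 1 - l) hl.le (by ring : (1 - l) + l = 1)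
    have hu2 : u = (1 - l) • pt + l • y := by rw [hu]; module
    rw [hu2]; simpa [smul_eq_mul] using h
  have h6 : 2 * β * G pt + ‖z - pt‖ ^ 2 ≤ 2 * β * ((1 - l) * G pt + l * G y)
      + ((1 - l) * ‖z - pt‖ ^ 2 + l * ‖z - y‖ ^ 2 - l * (1 - l) * C) := by
    have h1 := hmin u
    have h2 := mul_le_mul_of_nonneg_left hGu (by linarith : (0:ℝ) ≤ 2 * β)
    rw [hnu] at h1
    linarith
  have h7 : l * (2 * β * G pt + ‖z - pt‖ ^ 2 + (1 - l) * C)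
      ≤ l * (2 * β * G y + ‖z - y‖ ^ 2) := by nlinarith [h6]
  have h8 := le_of_mul_le_mul_left h7 hl
  have hlC : l * C ≤ ε := by
    have h1 : l ≤ ε / (C + 1) := min_le_right _ _
    have h2 : l * C ≤ ε / (C + 1) * C := mul_le_mul_of_nonneg_right h1 hC0
    have h3 : ε / (C + 1) * C ≤ ε := by
      rw [div_mul_eq_mul_div, div_le_iff₀ (by linarith)]
      nlinarith
    linarith
  linarith [hC.le, hC.ge]

/-- **Expected descent under smoothness of `F` (averaged/deterministic form).**
`F` convex, differentiable, `L`-smooth; `G_1,…,G_m` convex and `c`-Lipschitz;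
`H = F + ∑_j G_j` minimized at `x*`; `0 < α ≤ 1/(8L)`, `β = mα`, `z = x − α∇F(x)`.
Then `(1/m) ∑_j ‖prox_{βG_j}(z) − x*‖² ≤ ‖x − x*‖² − α(H x − H x*) + 7m²c²α²`. -/
theorem expected_descent_smooth
    (N m : ℕ) (hm : 0 < m) (c L : ℝ) (hc : 0 ≤ c) (hL : 0 < L)
    (F : EuclideanSpace ℝ (Fin N) → ℝ)
    (gradF : EuclideanSpace ℝ (Fin N) → EuclideanSpace ℝ (Fin N))
    (hFconv : ConvexOn ℝ Set.univ F)
    (hdiff : ∀ x, HasGradientAt F (gradF x) x)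
    (hlip : ∀ x y, ‖gradF x - gradF y‖ ≤ L * ‖x - y‖)
    (Gj : Fin m → EuclideanSpace ℝ (Fin N) → ℝ)
    (hGconv : ∀ j, ConvexOn ℝ Set.univ (Gj j))
    (hGlip : ∀ j, LipschitzWith c.toNNReal (Gj j))
    (xstar : EuclideanSpace ℝ (Fin N))
    (hxstar : ∀ y, F xstar + ∑ j, Gj j xstar ≤ F y + ∑ j, Gj j y)
    (α : ℝ) (hα : 0 < α) (hα8L : α ≤ 1 / (8 * L))
    (x z : EuclideanSpace ℝ (Fin N)) (hz : z = x - α • gradF x)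
    (p : Fin m → EuclideanSpace ℝ (Fin N))
    (hp : ∀ j, IsMinOn (fun u => Gj j u + (1 / (2 * ((m : ℝ) * α))) * ‖z - u‖ ^ 2)
      Set.univ (p j)) :
    (1 / (m : ℝ)) * ∑ j, ‖p j - xstar‖ ^ 2
      ≤ ‖x - xstar‖ ^ 2
        - α * ((F x + ∑ j, Gj j x) - (F xstar + ∑ j, Gj j xstar))
        + 7 * (m : ℝ) ^ 2 * c ^ 2 * α ^ 2 := by
  have hm1 : (1 : ℝ) ≤ (m : ℝ) := Nat.one_le_cast.mpr hm
  have hm0 : ((m : ℝ)) ≠ 0 := Nat.cast_ne_zero.mpr hm.ne'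
  have hB : (0 : ℝ) < (m : ℝ) * α := by positivity
  set B := (m : ℝ) * α with hBdef
  -- Lipschitz facts
  have hGlip' : ∀ j (a b : EuclideanSpace ℝ (Fin N)), Gj j a - Gj j b ≤ c * ‖a - b‖ := by
    intro j a b
    have h1 := (hGlip j).dist_le_mul a b
    rw [Real.coe_toNNReal c hc] at h1
    rw [Real.dist_eq] at h1
    rw [← dist_eq_norm]
    calc Gj j a - Gj j b ≤ |Gj j a - Gj j b| := le_abs_self _
      _ ≤ c * dist a b := h1
  -- prox inequalities at scale 1
  have hkk : ∀ C : ℝ, 2 * B * (1 / (2 * B) * C) = C := by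
    intro C; field_simp
  have hp2 : ∀ j u, 2 * B * Gj j (p j) + ‖z - p j‖ ^ 2 ≤ 2 * B * Gj j u + ‖z - u‖ ^ 2 := by
    intro j u
    have h1 := isMinOn_iff.mp (hp j) u (mem_univ u)
    have h2 := mul_le_mul_of_nonneg_left h1 (by linarith : (0:ℝ) ≤ 2 * B)
    rw [mul_add, mul_add, hkk, hkk] at h2
    exact h2
  have tp : ∀ j, 2 * B * Gj j (p j) + ‖z - p j‖ ^ 2 + ‖xstar - p j‖ ^ 2
      ≤ 2 * B * Gj j xstar + ‖z - xstar‖ ^ 2 := fun j =>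
    three_point (Gj j) (hGconv j) B hB z (p j) (hp2 j) xstar
  -- gradient norms
  have hxz : x - z = α • gradF x := by rw [hz]; abel
  have hnxz : ‖x - z‖ = α * ‖gradF x‖ := by
    rw [hxz, norm_smul, Real.norm_eq_abs, abs_of_pos hα]
  -- per-j bound
  have Kj : ∀ j, ‖p j - xstar‖ ^ 2 ≤ ‖z - xstar‖ ^ 2 + 2 * B * (Gj j xstar - Gj j x)
      + 2 * B * c * (α * ‖gradF x‖) + B ^ 2 * c ^ 2 := by
    intro j
    have h1 := tp j
    have h2 : Gj j x - Gj j (p j) ≤ c * ‖x - p j‖ := hGlip' j x (p j)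
    have h3 : ‖x - p j‖ ≤ α * ‖gradF x‖ + ‖z - p j‖ := by
      calc ‖x - p j‖ ≤ ‖x - z‖ + ‖z - p j‖ := by
            have := norm_sub_le_norm_sub_add_norm_sub x z (p j)
            simpa using this
        _ = α * ‖gradF x‖ + ‖z - p j‖ := by rw [hnxz]
    have hsq : 2 * B * c * ‖z - p j‖ - ‖z - p j‖ ^ 2 ≤ B ^ 2 * c ^ 2 := by
      nlinarith [sq_nonneg (‖z - p j‖ - B * c)]
    have h4 := mul_le_mul_of_nonneg_left h2 (by linarith : (0:ℝ) ≤ 2 * B)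
    have h5 := mul_le_mul_of_nonneg_left h3 (by positivity : (0:ℝ) ≤ 2 * B * c)
    have h6 : ‖p j - xstar‖ = ‖xstar - p j‖ := norm_sub_rev _ _
    rw [h6]
    nlinarith [h1, h4, h5, hsq]
  -- sum
  have hS : ∑ j, ‖p j - xstar‖ ^ 2 ≤ (m : ℝ) * ‖z - xstar‖ ^ 2
      + 2 * B * ((∑ j, Gj j xstar) - ∑ j, Gj j x)
      + (m : ℝ) * (2 * B * c * (α * ‖gradF x‖)) + (m : ℝ) * (B ^ 2 * c ^ 2) := by
    calc ∑ j, ‖p j - xstar‖ ^ 2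
        ≤ ∑ j, (‖z - xstar‖ ^ 2 + 2 * B * (Gj j xstar - Gj j x)
          + 2 * B * c * (α * ‖gradF x‖) + B ^ 2 * c ^ 2) :=
          Finset.sum_le_sum fun j _ => Kj j
      _ = _ := by
          rw [Finset.sum_add_distrib, Finset.sum_add_distrib, Finset.sum_add_distrib,
            ← Finset.mul_sum, Finset.sum_sub_distrib]
          simp [Finset.sum_const, Finset.card_univ, nsmul_eq_mul]
  have f1' : (1 / (m : ℝ)) * ∑ j, ‖p j - xstar‖ ^ 2
      ≤ ‖z - xstar‖ ^ 2 + 2 * α * ((∑ j, Gj j xstar) - ∑ j, Gj j x)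
      + 2 * (m : ℝ) * c * α ^ 2 * ‖gradF x‖ + (m : ℝ) ^ 2 * c ^ 2 * α ^ 2 := by
    have h := mul_le_mul_of_nonneg_left hS (by positivity : (0:ℝ) ≤ 1 / (m : ℝ))
    calc (1 / (m : ℝ)) * ∑ j, ‖p j - xstar‖ ^ 2 ≤ _ := h
      _ = ‖z - xstar‖ ^ 2 + 2 * α * ((∑ j, Gj j xstar) - ∑ j, Gj j x)
        + 2 * (m : ℝ) * c * α ^ 2 * ‖gradF x‖ + (m : ℝ) ^ 2 * c ^ 2 * α ^ 2 := by
          rw [hBdef]; field_simp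
  -- expansion of ‖z - xstar‖²
  have hzx : z - xstar = (x - xstar) - α • gradF x := by rw [hz]; abel
  have f2 : ‖z - xstar‖ ^ 2 = ‖x - xstar‖ ^ 2 - 2 * (α * ⟪gradF x, x - xstar⟫_ℝ)
      + α ^ 2 * ‖gradF x‖ ^ 2 := by
    rw [hzx, norm_sub_sq_real, real_inner_smul_right, norm_smul, Real.norm_eq_abs,
      mul_pow, sq_abs, real_inner_comm]
  -- cocoercivity
  have f3 := coco_lemma F gradF L hL hFconv hdiff hlip x xstar
  -- bound on ‖gradF xstar‖
  have hGs : ‖gradF xstar‖ ≤ (m : ℝ) * c := by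
    have hGsum : ∀ v : EuclideanSpace ℝ (Fin N),
        (∑ j, Gj j (xstar + v)) - ∑ j, Gj j xstar ≤ (m : ℝ) * (c * ‖v‖) := by
      intro v
      rw [← Finset.sum_sub_distrib]
      calc ∑ j, (Gj j (xstar + v) - Gj j xstar) ≤ ∑ _j : Fin m, c * ‖v‖ :=
            Finset.sum_le_sum fun j _ => by
              have := hGlip' j (xstar + v) xstar
              simpa using this
        _ = (m : ℝ) * (c * ‖v‖) := by
            simp [Finset.sum_const, Finset.card_univ, nsmul_eq_mul]
    have key : ∀ t : ℝ, 0 < t →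
        ‖gradF xstar‖ ^ 2 ≤ (m : ℝ) * c * ‖gradF xstar‖ + L * t / 2 * ‖gradF xstar‖ ^ 2 := by
      intro t ht
      set gs := gradF xstar with hgs
      set v := -(t • gs) with hvdef
      have hmin := hxstar (xstar + v)
      have hGd := hGsum v
      have hdesc := descent_lemma F gradF L hdiff hlip xstar (xstar + v)
      rw [add_sub_cancel_left] at hdesc
      have hip : ⟪gs, v⟫_ℝ = -(t * ‖gs‖ ^ 2) := by
        rw [hvdef, inner_neg_right, real_inner_smul_right, real_inner_self_eq_norm_sq]
      have hnv : ‖v‖ = t * ‖gs‖ := by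
        rw [hvdef, norm_neg, norm_smul, Real.norm_eq_abs, abs_of_pos ht]
      rw [hip, hnv] at hdesc
      rw [hnv] at hGd
      clear_value gs v
      have ht2 : (0:ℝ) < t := ht
      nlinarith [hmin, hGd, hdesc]
    have hsq : ‖gradF xstar‖ ^ 2 ≤ (m : ℝ) * c * ‖gradF xstar‖ := by
      refine le_of_forall_pos_le_add fun ε hε => ?_
      set D := L * ‖gradF xstar‖ ^ 2 with hD
      have hD0 : 0 ≤ D := by positivity
      have ht : (0:ℝ) < 2 * ε / (D + 1) := by positivity
      have h := key _ ht
      have hkey2 : L * (2 * ε / (D + 1)) / 2 * ‖gradF xstar‖ ^ 2 ≤ ε := by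
        have h1 : L * (2 * ε / (D + 1)) / 2 * ‖gradF xstar‖ ^ 2 = ε * (D / (D + 1)) := by
          rw [hD]; field_simp
        rw [h1]
        have h2 : D / (D + 1) ≤ 1 := by
          rw [div_le_one (by linarith)]; linarith
        nlinarith
      linarith
    rcases (norm_nonneg (gradF xstar)).eq_or_lt with h0 | h0
    · rw [← h0]; positivity
    · exact le_of_mul_le_mul_right (by nlinarith [hsq]) h0
  -- final numeric combination
  have f4 : ‖gradF x‖ ≤ ‖gradF x - gradF xstar‖ + (m : ℝ) * c := by
    calc ‖gradF x‖ = ‖(gradF x - gradF xstar) + gradF xstar‖ := by rw [sub_add_cancel]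
      _ ≤ ‖gradF x - gradF xstar‖ + ‖gradF xstar‖ := norm_add_le _ _
      _ ≤ ‖gradF x - gradF xstar‖ + (m : ℝ) * c := by linarith
  have f5 := hxstar x
  set s := ‖gradF x - gradF xstar‖ with hs
  set ng := ‖gradF x‖ with hng
  have hs0 : 0 ≤ s := norm_nonneg _
  have hng0 : 0 ≤ ng := norm_nonneg _
  -- σ = 1/(2L) s², and s² = 2Lσ
  set σ := 1 / (2 * L) * s ^ 2 with hσdef
  have hσ0 : 0 ≤ σ := by positivity
  clear_value B s ng σ
  have hf' : α ^ 2 * s ^ 2 = 2 * L * σ * α ^ 2 := by rw [hσdef]; field_simp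
  have hαL : α * (8 * L) ≤ 1 := by
    rw [← le_div_iff₀ (by positivity : (0:ℝ) < 8 * L)]; exact hα8L
  have h3L : 3 * L * α ≤ 1 := by nlinarith [mul_pos hα hL]
  have h_e : 0 ≤ α * σ * (1 - 3 * L * α) :=
    mul_nonneg (mul_nonneg hα.le hσ0) (by linarith)
  have h_f3' : 2 * α * (F x - F xstar + σ) ≤ 2 * α * ⟪gradF x, x - xstar⟫_ℝ := by
    have := mul_le_mul_of_nonneg_left f3 (by linarith : (0:ℝ) ≤ 2 * α)
    exact this
  have h_a : α ^ 2 * ng ^ 2 ≤ α ^ 2 * (s + (m : ℝ) * c) ^ 2 :=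
    mul_le_mul_of_nonneg_left (by nlinarith [f4]) (sq_nonneg α)
  have h_b : 2 * (m : ℝ) * c * α ^ 2 * ng ≤ 2 * (m : ℝ) * c * α ^ 2 * (s + (m : ℝ) * c) :=
    mul_le_mul_of_nonneg_left f4 (by positivity)
  have h_c : 4 * (m : ℝ) * c * α ^ 2 * s ≤ 2 * α ^ 2 * s ^ 2 + 2 * (m : ℝ) ^ 2 * c ^ 2 * α ^ 2 := by
    nlinarith [sq_nonneg (α * s - α * ((m : ℝ) * c))]
  have h_d : 0 ≤ α * ((F x + ∑ j, Gj j x) - (F xstar + ∑ j, Gj j xstar)) :=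
    mul_nonneg hα.le (by linarith)
  have h_g : (0:ℝ) ≤ (m : ℝ) ^ 2 * c ^ 2 * α ^ 2 := by positivity
  have h_main : (1 / (m : ℝ)) * ∑ j, ‖p j - xstar‖ ^ 2
      ≤ ‖x - xstar‖ ^ 2 - 2 * α * (F x - F xstar) - 2 * α * σ + α ^ 2 * ng ^ 2
        + 2 * α * ((∑ j, Gj j xstar) - ∑ j, Gj j x)
        + 2 * (m : ℝ) * c * α ^ 2 * ng + (m : ℝ) ^ 2 * c ^ 2 * α ^ 2 := by
    linarith [f1', f2, h_f3']
  linarith [h_main, h_a, h_b, h_c, h_d, h_e, h_g, hf']
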